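/- Bootstrap lemma for the remainder energy: fix C>0, δ>0 and ε∈(0,1/2). For α∈(0,1) set C_{N+1} = C δ (log|log α|)^{1/2}. There exists α₀>0 such that for all 0<α<α₀ the following holds: if T ≤ α log|log α|/(4C_{N+1}) and F:[0,T]→[0,∞) is continuous with F(0) ≤ α^{1−ε}, sup_{t∈[0,T]}F(t) ≤ 4√α, and F(t) ≤ F(0) + C_{N+1}∫₀ᵗ (C_{N+1} e^{C_{N+1}τ/α} + α e^{2C_{N+1}τ/α}) dτ + ∫₀ᵗ (C_{N+1}/α)(1 + e^{C_{N+1}τ/α}) F(τ) dτ + ∫₀ᵗ F(τ)²/α dτ for all t∈[0,T], then in fact sup_{t∈[0,T]}F(t) ≤ 3√α. -/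

import Mathlib

open MeasureTheory Set Real

noncomputable section

/-- `log |log α|` -/
def LL (α : ℝ) : ℝ := Real.log |Real.log α|

/-- the constant `C_{N+1} = C δ (log|log α|)^{1/2}` -/
def CN1 (C δ α : ℝ) : ℝ := C * δ * LL α ^ ((1:ℝ)/2)

open Filter intervalIntegral

set_option maxHeartbeats 1000000

lemma gronwall_const {F : ℝ → ℝ} {T A K : ℝ}
    (hF : ContinuousOn F (Icc 0 T)) (hK : 0 < K)
    (h : ∀ t ∈ Icc (0:ℝ) T, F t ≤ A + K * ∫ τ in (0:ℝ)..t, F τ) :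
    ∀ t ∈ Icc (0:ℝ) T, F t ≤ A * Real.exp (K * t) := by
  intro t ht
  have hT : (0:ℝ) ≤ T := le_trans ht.1 ht.2
  set g : ℝ → ℝ := fun t => ∫ τ in (0:ℝ)..t, F τ with hgdef
  set φ : ℝ → ℝ := fun t => Real.exp (-K * t) * (A / K + g t) with hφdef
  have hgc : ContinuousOn g (Icc 0 T) := by
    have := continuousOn_primitive_interval (μ := volume) (f := F) (a := 0) (b := T)
      (by rw [uIcc_of_le hT]; exact hF.integrableOn_Icc)
    rwa [uIcc_of_le hT] at this
  have hderiv : ∀ x ∈ Ioo (0:ℝ) T, HasDerivAt g (F x) x := by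
    intro x hx
    refine integral_hasDerivAt_right ?_ ?_ ?_
    · exact (hF.mono (Icc_subset_Icc le_rfl hx.2.le)).intervalIntegrable_of_Icc hx.1.le
    · exact (hF.mono Ioo_subset_Icc_self).stronglyMeasurableAtFilter isOpen_Ioo x hx
    · exact hF.continuousAt (Icc_mem_nhds hx.1 hx.2)
  have hφderiv : ∀ x ∈ Ioo (0:ℝ) T,
      HasDerivAt φ (Real.exp (-K * x) * (F x - (A + K * g x))) x := by
    intro x hx
    have h1 : HasDerivAt (fun t => Real.exp (-K * t)) (-K * Real.exp (-K * x)) x := by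
      simpa [mul_comm] using ((hasDerivAt_id x).const_mul (-K)).exp
    have h2 : HasDerivAt (fun t => A / K + g t) (F x) x := (hderiv x hx).const_add _
    have : HasDerivAt φ (-K * Real.exp (-K * x) * (A / K + g x) + Real.exp (-K * x) * F x) x :=
      h1.mul h2
    convert this using 1
    have hK0 : K ≠ 0 := hK.ne'
    have hA : K * (A / K) = A := mul_div_cancel₀ A hK0
    linear_combination Real.exp (-K * x) * hA
  have hanti : AntitoneOn φ (Icc 0 T) := by
    apply antitoneOn_of_deriv_nonpos (convex_Icc 0 T)
    · exact (Real.continuous_exp.comp (continuous_const.mul continuous_id)).continuousOn.mul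
        (continuousOn_const.add hgc)
    · intro x hx
      rw [interior_Icc] at hx
      exact (hφderiv x hx).differentiableAt.differentiableWithinAt
    · intro x hx
      rw [interior_Icc] at hx
      rw [(hφderiv x hx).deriv]
      have := h x (Ioo_subset_Icc_self hx)
      have hexp : (0:ℝ) < Real.exp (-K * x) := Real.exp_pos _
      nlinarith
  have h0 : φ t ≤ φ 0 := hanti (left_mem_Icc.2 hT) ht ht.1
  have hg0 : g 0 = 0 := integral_same
  have hφ0 : φ 0 = A / K := by simp [hφdef, hg0]
  have ht' : A / K + g t ≤ (A / K) * Real.exp (K * t) := by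
    have hexp : (0:ℝ) < Real.exp (-K * t) := Real.exp_pos _
    rw [hφ0] at h0
    have : Real.exp (-K * t) * (A / K + g t) ≤ A / K := h0
    calc A / K + g t = Real.exp (K * t) * (Real.exp (-K * t) * (A / K + g t)) := by
          rw [← mul_assoc, ← Real.exp_add]; simp
      _ ≤ Real.exp (K * t) * (A / K) := by
          exact mul_le_mul_of_nonneg_left this (Real.exp_pos _).le
      _ = (A / K) * Real.exp (K * t) := by ring
  have hKg : A + K * g t ≤ A * Real.exp (K * t) := by
    have := mul_le_mul_of_nonneg_left ht' hK.le
    calc A + K * g t = K * (A / K + g t) := by field_simp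
      _ ≤ K * ((A / K) * Real.exp (K * t)) := this
      _ = A * Real.exp (K * t) := by field_simp
  linarith [h t ht]

lemma sq_div_four_le_exp {x : ℝ} (hx : 0 ≤ x) : x ^ 2 / 4 ≤ Real.exp x := by
  have h1 : x / 2 + 1 ≤ Real.exp (x / 2) := Real.add_one_le_exp _
  have h2 : Real.exp x = Real.exp (x / 2) * Real.exp (x / 2) := by
    rw [← Real.exp_add]; ring_nf
  nlinarith [Real.exp_pos (x / 2)]

lemma aux_exp_neg {x : ℝ} (hx : 0 < x) : Real.exp (-x) ≤ 4 / x ^ 2 := by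
  have h1 : x / 2 + 1 ≤ Real.exp (x / 2) := Real.add_one_le_exp _
  have h2 : x ^ 2 / 4 ≤ Real.exp x := by
    have : Real.exp x = Real.exp (x / 2) * Real.exp (x / 2) := by
      rw [← Real.exp_add]; ring_nf
    nlinarith [Real.exp_pos (x/2)]
  rw [Real.exp_neg]
  rw [inv_le_iff_one_le_mul₀ (Real.exp_pos x)]
  have hx2 : 0 < x ^ 2 := by positivity
  rw [div_mul_eq_mul_div, le_div_iff₀ hx2]
  nlinarith

/-- **Bootstrap lemma for the remainder energy** (Lemma 5.2). -/
theorem bootstrap_lemma_remainder_energy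
    (C δ ε : ℝ) (hC : 0 < C) (hδ : 0 < δ) (hε : 0 < ε) (hε' : ε < 1/2) :
    ∃ α₀ : ℝ, 0 < α₀ ∧
      ∀ α : ℝ, 0 < α → α < α₀ →
        ∀ T : ℝ, T ≤ α * LL α / (4 * CN1 C δ α) →
          ∀ F : ℝ → ℝ, ContinuousOn F (Icc 0 T) →
            (∀ t ∈ Icc (0:ℝ) T, 0 ≤ F t) →
            F 0 ≤ α ^ (1 - ε) →
            (∀ t ∈ Icc (0:ℝ) T, F t ≤ 4 * Real.sqrt α) →
            (∀ t ∈ Icc (0:ℝ) T,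
              F t ≤ F 0
                + CN1 C δ α *
                    ∫ τ in (0:ℝ)..t,
                      (CN1 C δ α * Real.exp (CN1 C δ α * τ / α)
                        + α * Real.exp (2 * CN1 C δ α * τ / α))
                + (∫ τ in (0:ℝ)..t,
                    (CN1 C δ α / α) * (1 + Real.exp (CN1 C δ α * τ / α)) * F τ)
                + ∫ τ in (0:ℝ)..t, F τ ^ 2 / α) →
            ∀ t ∈ Icc (0:ℝ) T, F t ≤ 3 * Real.sqrt α := by
  set γ : ℝ := 1/2 - ε with hγdef
  clear_value γ
  have hγ : 0 < γ := by rw [hγdef]; linarith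
  have hCδ : 0 < C * δ := mul_pos hC hδ
  -- eventual conditions on L
  have hev : ∀ᶠ L : ℝ in atTop,
      16 ≤ L ∧ 8/ε ≤ Real.sqrt L ∧ 8/ε ≤ L ∧ 16*(C*δ)/ε ≤ L ∧
        4/γ ≤ L ^ ((1:ℝ)/4) ∧ 128/(C*δ*γ) ≤ L ∧ 8/γ ≤ L := by
    have e1 : ∀ᶠ L : ℝ in atTop, 16 ≤ L := eventually_ge_atTop 16
    have e2 : ∀ᶠ L : ℝ in atTop, 8/ε ≤ Real.sqrt L := by
      have := (tendsto_rpow_atTop (by norm_num : (0:ℝ) < 1/2)).eventually_ge_atTop (8/ε)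
      exact this.mono fun L h => by rw [Real.sqrt_eq_rpow]; exact h
    have e3 : ∀ᶠ L : ℝ in atTop, 8/ε ≤ L := eventually_ge_atTop _
    have e4 : ∀ᶠ L : ℝ in atTop, 16*(C*δ)/ε ≤ L := eventually_ge_atTop _
    have e5 : ∀ᶠ L : ℝ in atTop, 4/γ ≤ L ^ ((1:ℝ)/4) :=
      (tendsto_rpow_atTop (by norm_num : (0:ℝ) < 1/4)).eventually_ge_atTop _
    have e6 : ∀ᶠ L : ℝ in atTop, 128/(C*δ*γ) ≤ L := eventually_ge_atTop _
    have e7 : ∀ᶠ L : ℝ in atTop, 8/γ ≤ L := eventually_ge_atTop _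
    filter_upwards [e1, e2, e3, e4, e5, e6, e7] with L h1 h2 h3 h4 h5 h6 h7
    exact ⟨h1, h2, h3, h4, h5, h6, h7⟩
  obtain ⟨L₀, hL₀⟩ := eventually_atTop.1 hev
  refine ⟨Real.exp (-L₀), Real.exp_pos _, ?_⟩
  intro α hα hα' T hT F hFc hFpos hF0 hFboot hFint t ht

  set L : ℝ := -Real.log α with hLdef
  clear_value L
  have hlogα : Real.log α = -L := by rw [hLdef]; ring
  have hLge : L₀ ≤ L := by
    have h := Real.log_lt_log hα hα'
    rw [Real.log_exp] at h
    rw [hLdef]; linarith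
  obtain ⟨h16, hc2, hc3, hc4, hc5, hc6, hc7⟩ := hL₀ L hLge
  have hL0 : 0 < L := lt_of_lt_of_le (by norm_num) h16
  have hL1 : 1 ≤ L := le_trans (by norm_num) h16
  have habs : |Real.log α| = L := by rw [hlogα, abs_neg, abs_of_pos hL0]
  have hαe : α = Real.exp (-L) := by rw [← hlogα, Real.exp_log hα]
  have hα1 : α ≤ 1 := by rw [hαe]; exact Real.exp_le_one_iff.2 (by linarith)
  set B : ℝ := Real.log L with hBdef
  clear_value B
  have hB1 : 1 ≤ B := by
    rw [hBdef]
    have h3 : Real.exp 1 ≤ L := le_trans (le_trans Real.exp_one_lt_d9.le (by norm_num)) h16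
    calc (1:ℝ) = Real.log (Real.exp 1) := (Real.log_exp 1).symm
      _ ≤ Real.log L := Real.log_le_log (Real.exp_pos 1) h3
  have hLLα : LL α = B := by unfold LL; rw [habs, hBdef]
  have hsqL : 0 < Real.sqrt L := Real.sqrt_pos.2 hL0
  have hB2 : B ≤ 2 * Real.sqrt L := by
    have h1 : Real.log (Real.sqrt L) = B / 2 := by rw [Real.log_sqrt hL0.le, hBdef]
    have h2 : Real.log (Real.sqrt L) ≤ Real.sqrt L - 1 := Real.log_le_sub_one_of_pos hsqL
    linarith
  have hεL8 : 8 ≤ ε * Real.sqrt L := by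
    rw [div_le_iff₀ hε] at hc2; linarith
  have hmulL : Real.sqrt L * Real.sqrt L = L := Real.mul_self_sqrt hL0.le
  have hsqL1 : 1 ≤ Real.sqrt L := by
    rw [show (1:ℝ) = Real.sqrt 1 by simp]
    exact Real.sqrt_le_sqrt hL1
  have hsqLL : Real.sqrt L ≤ L := by
    have h := mul_le_mul_of_nonneg_right hsqL1 hsqL.le
    rw [one_mul] at h
    linarith [h, hmulL]
  have hBε : B ≤ ε * L / 4 := by
    have h1 : 8 * Real.sqrt L ≤ ε * L := by nlinarith [hsqL.le]
    nlinarith [hB2, hsqL.le]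
  set c : ℝ := CN1 C δ α with hcdef
  clear_value c
  have hc_eq : c = C * δ * B ^ ((1:ℝ)/2) := by rw [hcdef]; unfold CN1; rw [hLLα]
  have hBq1 : 1 ≤ B ^ ((1:ℝ)/2) := by
    calc (1:ℝ) = (1:ℝ) ^ ((1:ℝ)/2) := (Real.one_rpow _).symm
      _ ≤ B ^ ((1:ℝ)/2) := Real.rpow_le_rpow zero_le_one hB1 (by norm_num)
  have hBqB : B ^ ((1:ℝ)/2) ≤ B := by
    nth_rewrite 2 [← Real.rpow_one B]
    exact Real.rpow_le_rpow_of_exponent_le hB1 (by norm_num)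
  have hc_pos : 0 < c := by
    rw [hc_eq]; exact mul_pos hCδ (lt_of_lt_of_le one_pos hBq1)
  have hc_le : c ≤ C * δ * B := by
    rw [hc_eq]; exact mul_le_mul_of_nonneg_left hBqB hCδ.le
  have hc_ge : C * δ ≤ c := by
    rw [hc_eq]
    calc C * δ = C * δ * 1 := (mul_one _).symm
      _ ≤ C * δ * B ^ ((1:ℝ)/2) := mul_le_mul_of_nonneg_left hBq1 hCδ.le
  have hT0 : 0 ≤ T := le_trans ht.1 ht.2
  rw [hLLα] at hT
  have hcT : c * T ≤ α * B / 4 := by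
    have h1 := mul_le_mul_of_nonneg_left hT hc_pos.le
    calc c * T ≤ c * (α * B / (4 * c)) := h1
      _ = α * B / 4 := by field_simp
  have hcTα : c * T / α ≤ B / 4 := by
    rw [div_le_iff₀ hα]; linarith [hcT]
  set E4 : ℝ := Real.exp (B/4) with hE4def
  clear_value E4
  set E2 : ℝ := Real.exp (B/2) with hE2def
  clear_value E2
  have hE4_1 : 1 ≤ E4 := by rw [hE4def]; exact Real.one_le_exp (by linarith)
  have hE2_1 : 1 ≤ E2 := by rw [hE2def]; exact Real.one_le_exp (by linarith)
  set sq : ℝ := Real.sqrt α with hsqdef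
  clear_value sq
  have hsq_pos : 0 < sq := by rw [hsqdef]; exact Real.sqrt_pos.2 hα
  have hsq_mul : sq * sq = α := by rw [hsqdef]; exact Real.mul_self_sqrt hα.le
  set M1 : ℝ := c * E4 + α * E2 with hM1def
  clear_value M1
  set K1 : ℝ := B / 4 * (c * (1 + E4)) + α * B / sq with hK1def
  clear_value K1
  set A : ℝ := α ^ (1 - ε) + c * T * M1 with hAdef
  clear_value A
  have hM1_0 : 0 ≤ M1 := by
    rw [hM1def]
    have h1 : 0 ≤ c * E4 := mul_nonneg hc_pos.le (by linarith)
    have h2 : 0 ≤ α * E2 := mul_nonneg hα.le (by linarith)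
    linarith
  have hK1_pos : 0 < K1 := by
    rw [hK1def]
    have h1 : 0 < B / 4 * (c * (1 + E4)) :=
      mul_pos (by linarith) (mul_pos hc_pos (by linarith))
    have h2 : 0 < α * B / sq := div_pos (mul_pos hα (by linarith)) hsq_pos
    linarith
  have hrpow0 : 0 ≤ α ^ (1 - ε) := Real.rpow_nonneg hα.le _
  have hA0 : 0 ≤ A := by
    rw [hAdef]
    have := mul_nonneg (mul_nonneg hc_pos.le hT0) hM1_0
    linarith
  -- key integral inequality
  have key : ∀ s ∈ Icc (0:ℝ) T, F s ≤ A + K1 * ∫ τ in (0:ℝ)..s, F τ := by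
    intro s hs
    have hs0 : (0:ℝ) ≤ s := hs.1
    have hsub : Icc (0:ℝ) s ⊆ Icc 0 T := Icc_subset_Icc le_rfl hs.2
    have hFcs : ContinuousOn F (Icc 0 s) := hFc.mono hsub
    have hFi : IntervalIntegrable F volume 0 s := hFcs.intervalIntegrable_of_Icc hs0
    have hexp4 : ∀ τ ∈ Icc (0:ℝ) s, Real.exp (c * τ / α) ≤ E4 := by
      intro τ hτ
      rw [hE4def]
      apply Real.exp_le_exp.2
      have h1 : c * τ ≤ c * T := mul_le_mul_of_nonneg_left (le_trans hτ.2 hs.2) hc_pos.le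
      have h2 : c * τ / α ≤ c * T / α := (div_le_div_iff_of_pos_right hα).2 h1
      linarith [hcTα]
    have hexp2 : ∀ τ ∈ Icc (0:ℝ) s, Real.exp (2 * c * τ / α) ≤ E2 := by
      intro τ hτ
      rw [hE2def]
      apply Real.exp_le_exp.2
      have h1 : c * τ ≤ c * T := mul_le_mul_of_nonneg_left (le_trans hτ.2 hs.2) hc_pos.le
      have h2 : c * τ / α ≤ c * T / α := (div_le_div_iff_of_pos_right hα).2 h1
      have h3 : 2 * c * τ / α = 2 * (c * τ / α) := by ring
      rw [h3]; linarith [hcTα]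
    have hstep := hFint s hs
    set J : ℝ := ∫ τ in (0:ℝ)..s, c / α * (1 + Real.exp (c * τ / α)) * F τ with hJdef
    clear_value J
    have hJ0 : 0 ≤ J := by
      rw [hJdef]
      apply intervalIntegral.integral_nonneg hs0
      intro u hu
      have h1 : 0 ≤ c / α := (div_pos hc_pos hα).le
      have h2 : 0 ≤ 1 + Real.exp (c * u / α) := by positivity
      exact mul_nonneg (mul_nonneg h1 h2) (hFpos u (hsub hu))
    set J2 : ℝ := ∫ τ in (0:ℝ)..s, F τ ^ 2 / α with hJ2def
    clear_value J2
    have hJ2_0 : 0 ≤ J2 := by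
      rw [hJ2def]
      apply intervalIntegral.integral_nonneg hs0
      intro u hu
      positivity
    have hI2 : J ≤ c / α * (1 + E4) * ∫ τ in (0:ℝ)..s, F τ := by
      rw [hJdef]
      have hptw : ∀ τ ∈ Icc (0:ℝ) s,
          c / α * (1 + Real.exp (c * τ / α)) * F τ ≤ (c / α * (1 + E4)) * F τ := by
        intro τ hτ
        apply mul_le_mul_of_nonneg_right _ (hFpos τ (hsub hτ))
        apply mul_le_mul_of_nonneg_left _ (le_of_lt (div_pos hc_pos hα))
        linarith [hexp4 τ hτ]
      have hint1 : IntervalIntegrable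
          (fun τ => c / α * (1 + Real.exp (c * τ / α)) * F τ) volume 0 s := by
        apply ContinuousOn.intervalIntegrable
        rw [uIcc_of_le hs0]
        exact (Continuous.continuousOn (by fun_prop)).mul hFcs
      have hint2 : IntervalIntegrable (fun τ => (c / α * (1 + E4)) * F τ) volume 0 s :=
        hFi.const_mul _
      have := intervalIntegral.integral_mono_on hs0 hint1 hint2 hptw
      rwa [intervalIntegral.integral_const_mul] at this
    have hIall : (∫ τ in (0:ℝ)..s,
        (c * Real.exp (c * τ / α) + α * Real.exp (2 * c * τ / α) + J + J2))
          ≤ s * (M1 + J + J2) := by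
      have hint1 : IntervalIntegrable
          (fun τ => c * Real.exp (c * τ / α) + α * Real.exp (2 * c * τ / α) + J + J2)
          volume 0 s := by
        apply Continuous.intervalIntegrable
        fun_prop
      have hptw : ∀ τ ∈ Icc (0:ℝ) s,
          c * Real.exp (c * τ / α) + α * Real.exp (2 * c * τ / α) + J + J2 ≤ M1 + J + J2 := by
        intro τ hτ
        rw [hM1def]
        have h1 := mul_le_mul_of_nonneg_left (hexp4 τ hτ) hc_pos.le
        have h2 := mul_le_mul_of_nonneg_left (hexp2 τ hτ) hα.le
        linarith
      have h8 := intervalIntegral.integral_mono_on hs0 hint1 (intervalIntegrable_const) hptw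
      calc (∫ τ in (0:ℝ)..s,
            (c * Real.exp (c * τ / α) + α * Real.exp (2 * c * τ / α) + J + J2))
          ≤ ∫ _ in (0:ℝ)..s, (M1 + J + J2) := h8
        _ = s * (M1 + J + J2) := by
            rw [intervalIntegral.integral_const, smul_eq_mul, sub_zero]
    have hI3 : J2 ≤ (4 / sq) * ∫ τ in (0:ℝ)..s, F τ := by
      rw [hJ2def]
      have hptw : ∀ τ ∈ Icc (0:ℝ) s, F τ ^ 2 / α ≤ (4 / sq) * F τ := by
        intro τ hτ
        have hb := hFboot τ (hsub hτ)
        have hp := hFpos τ (hsub hτ)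
        rw [div_le_iff₀ hα]
        have h4 : 4 / sq * F τ * α = 4 * F τ * sq := by
          rw [← hsq_mul]; field_simp
        rw [h4]
        have h5 := mul_le_mul_of_nonneg_left hb hp
        have h6 : F τ ^ 2 = F τ * F τ := by ring
        linarith
      have hint1 : IntervalIntegrable (fun τ => F τ ^ 2 / α) volume 0 s := by
        apply ContinuousOn.intervalIntegrable
        rw [uIcc_of_le hs0]
        exact (hFcs.pow 2).div_const α
      have hint2 : IntervalIntegrable (fun τ => (4 / sq) * F τ) volume 0 s :=
        hFi.const_mul _
      have := intervalIntegral.integral_mono_on hs0 hint1 hint2 hptw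
      rwa [intervalIntegral.integral_const_mul] at this
    -- assemble
    have q0 : c * (∫ τ in (0:ℝ)..s,
        (c * Real.exp (c * τ / α) + α * Real.exp (2 * c * τ / α) + J + J2))
          ≤ c * (s * (M1 + J + J2)) :=
      mul_le_mul_of_nonneg_left hIall hc_pos.le
    have q1 : c * (s * (M1 + J + J2)) = c * s * M1 + c * s * J + c * s * J2 := by ring
    have q2 : c * s * M1 ≤ c * T * M1 :=
      mul_le_mul_of_nonneg_right (mul_le_mul_of_nonneg_left hs.2 hc_pos.le) hM1_0
    have q3 : c * s ≤ α * B / 4 :=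
      le_trans (mul_le_mul_of_nonneg_left hs.2 hc_pos.le) hcT
    have q4 : c * s * J ≤ (α * B / 4) * J := mul_le_mul_of_nonneg_right q3 hJ0
    have q5 : c * s * J2 ≤ (α * B / 4) * J2 := mul_le_mul_of_nonneg_right q3 hJ2_0
    have hαB0 : 0 ≤ α * B / 4 := by
      have : 0 ≤ α * B := mul_nonneg hα.le (by linarith)
      linarith
    have q6 : (α * B / 4) * J ≤ (α * B / 4) * (c / α * (1 + E4) * ∫ τ in (0:ℝ)..s, F τ) :=
      mul_le_mul_of_nonneg_left hI2 hαB0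
    have q7 : (α * B / 4) * (c / α * (1 + E4) * ∫ τ in (0:ℝ)..s, F τ)
        = (B / 4 * (c * (1 + E4))) * ∫ τ in (0:ℝ)..s, F τ := by
      field_simp
    have q8 : (α * B / 4) * J2 ≤ (α * B / 4) * ((4 / sq) * ∫ τ in (0:ℝ)..s, F τ) :=
      mul_le_mul_of_nonneg_left hI3 hαB0
    have q9 : (α * B / 4) * ((4 / sq) * ∫ τ in (0:ℝ)..s, F τ)
        = (α * B / sq) * ∫ τ in (0:ℝ)..s, F τ := by
      ring
    have hring : A + K1 * ∫ τ in (0:ℝ)..s, F τ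
        = α ^ (1 - ε) + c * T * M1 + ((B / 4 * (c * (1 + E4))) * ∫ τ in (0:ℝ)..s, F τ)
          + ((α * B / sq) * ∫ τ in (0:ℝ)..s, F τ) := by
      rw [hAdef, hK1def]; ring
    linarith [hstep, q0, q1, q2, q4, q5, q6, q7, q8, q9, hF0]
  have hG := gronwall_const hFc hK1_pos key t ht
  have hGT : F t ≤ A * Real.exp (K1 * T) := by
    refine le_trans hG (mul_le_mul_of_nonneg_left (Real.exp_le_exp.2 ?_) hA0)
    exact mul_le_mul_of_nonneg_left ht.2 hK1_pos.le
  -- numeric bounds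
  have hxe : ∀ x : ℝ, x ≤ Real.exp x := fun x => by linarith [Real.add_one_le_exp x]
  have hy0 : (0:ℝ) ≤ ε * L / 4 := by positivity
  have hey := Real.exp_pos (ε * L / 4)
  have hey1 : 1 ≤ Real.exp (ε * L / 4) := Real.one_le_exp hy0
  have hcexp : c ≤ Real.exp (ε * L / 4) := by
    have h1 : c ≤ C * δ * B := hc_le
    have h2 : C * δ * B ≤ C * δ * (ε * L / 4) := mul_le_mul_of_nonneg_left hBε hCδ.le
    have h3 : C * δ ≤ ε * L / 16 := by
      rw [div_le_iff₀ hε] at hc4; linarith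
    have h4 : (ε * L / 4) ^ 2 / 4 ≤ Real.exp (ε * L / 4) := sq_div_four_le_exp hy0
    have h5 : C * δ * (ε * L / 4) ≤ (ε * L / 16) * (ε * L / 4) :=
      mul_le_mul_of_nonneg_right h3 (by positivity)
    have h6 : (ε * L / 16) * (ε * L / 4) = (ε * L / 4) ^ 2 / 4 := by ring
    linarith
  have hBexp : B / 4 ≤ Real.exp (ε * L / 4) :=
    le_trans (by linarith) (le_trans hBε (hxe _))
  have hE4exp : E4 ≤ Real.exp (ε * L / 4) := by
    rw [hE4def]; exact Real.exp_le_exp.2 (by linarith)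
  have hE2exp : E2 ≤ Real.exp (ε * L / 4) := by
    rw [hE2def]; exact Real.exp_le_exp.2 (by linarith)
  have h2e : 2 ≤ Real.exp (ε * L / 4) := by
    have h8 : 8 ≤ ε * L := by rw [div_le_iff₀ hε] at hc3; linarith
    linarith [hxe (ε * L / 4)]
  -- C1 : c*T*M1 ≤ α^(1-ε)
  have hrpow_eq : α ^ (1 - ε) = α * Real.exp (ε * L) := by
    rw [Real.rpow_def_of_pos hα, hlogα, hαe, ← Real.exp_add]
    congr 1; ring
  have hC1 : c * T * M1 ≤ α ^ (1 - ε) := by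
    have hstep1 : c * T * M1 ≤ (α * B / 4) * M1 := mul_le_mul_of_nonneg_right hcT hM1_0
    have hM1b : M1 ≤ 2 * (Real.exp (ε * L / 4) * Real.exp (ε * L / 4)) := by
      rw [hM1def]
      have h1 : c * E4 ≤ Real.exp (ε * L / 4) * Real.exp (ε * L / 4) :=
        mul_le_mul hcexp hE4exp (by linarith) hey.le
      have h2 : α * E2 ≤ 1 * Real.exp (ε * L / 4) :=
        mul_le_mul hα1 hE2exp (by linarith) one_pos.le
      have h3 : Real.exp (ε * L / 4) ≤ Real.exp (ε * L / 4) * Real.exp (ε * L / 4) :=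
        le_mul_of_one_le_left hey.le hey1
      linarith
    have hstep2 : (α * B / 4) * M1 ≤ (α * Real.exp (ε * L / 4)) *
        (2 * (Real.exp (ε * L / 4) * Real.exp (ε * L / 4))) := by
      have h1 : α * B / 4 ≤ α * Real.exp (ε * L / 4) := by
        have := mul_le_mul_of_nonneg_left hBexp hα.le
        calc α * B / 4 = α * (B / 4) := by ring
          _ ≤ α * Real.exp (ε * L / 4) := this
      exact mul_le_mul h1 hM1b hM1_0 (by positivity)
    have hfin : (α * Real.exp (ε * L / 4)) *
        (2 * (Real.exp (ε * L / 4) * Real.exp (ε * L / 4))) ≤ α * Real.exp (ε * L) := by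
      have h4 : Real.exp (ε * L) = Real.exp (ε * L / 4) * Real.exp (ε * L / 4) *
          Real.exp (ε * L / 4) * Real.exp (ε * L / 4) := by
        rw [← Real.exp_add, ← Real.exp_add, ← Real.exp_add]; ring_nf
      rw [h4]
      have p0 : 0 ≤ Real.exp (ε * L / 4) * Real.exp (ε * L / 4) * Real.exp (ε * L / 4) := by
        positivity
      have p1 : 2 * (Real.exp (ε * L / 4) * Real.exp (ε * L / 4) * Real.exp (ε * L / 4))
          ≤ Real.exp (ε * L / 4) * (Real.exp (ε * L / 4) * Real.exp (ε * L / 4) *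
            Real.exp (ε * L / 4)) := mul_le_mul_of_nonneg_right h2e p0
      have p2 := mul_le_mul_of_nonneg_left p1 hα.le
      calc α * Real.exp (ε * L / 4) * (2 * (Real.exp (ε * L / 4) * Real.exp (ε * L / 4)))
          = α * (2 * (Real.exp (ε * L / 4) * Real.exp (ε * L / 4) * Real.exp (ε * L / 4))) := by
            ring
        _ ≤ α * (Real.exp (ε * L / 4) * (Real.exp (ε * L / 4) * Real.exp (ε * L / 4) *
            Real.exp (ε * L / 4))) := p2
        _ = α * (Real.exp (ε * L / 4) * Real.exp (ε * L / 4) * Real.exp (ε * L / 4) *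
            Real.exp (ε * L / 4)) := by ring
    rw [hrpow_eq]
    linarith
  -- C2 : K1 * T ≤ γ * L / 2
  have hE4L : E4 = L ^ ((1:ℝ)/4) := by
    rw [hE4def, Real.rpow_def_of_pos hL0, hBdef]
    congr 1; ring
  have hC2 : K1 * T ≤ γ * L / 2 := by
    have hsplit : K1 * T = (B / 4) * (1 + E4) * (c * T) + α * B / sq * T := by
      rw [hK1def]; ring
    have hfirst : (B / 4) * (1 + E4) * (c * T) ≤ γ * L / 4 := by
      have hcT0 : 0 ≤ c * T := mul_nonneg hc_pos.le hT0
      have e1 : (B / 4) * (1 + E4) ≤ (B / 4) * (2 * E4) :=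
        mul_le_mul_of_nonneg_left (by linarith) (by linarith)
      have e2 : (B / 4) * (1 + E4) * (c * T) ≤ (B / 4) * (2 * E4) * (α * B / 4) := by
        apply mul_le_mul e1 hcT hcT0
        have h0 : 0 ≤ B / 4 := by linarith
        have h1 : 0 ≤ 2 * E4 := by linarith
        exact mul_nonneg h0 h1
      have e3 : (B / 4) * (2 * E4) * (α * B / 4) = α * (B * B) * E4 / 8 := by ring
      have hBB : B * B ≤ 4 * L := by
        have h := mul_le_mul hB2 hB2 (by linarith : (0:ℝ) ≤ B)
          (by linarith [hsqL.le] : (0:ℝ) ≤ 2 * Real.sqrt L)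
        have h2 : 2 * Real.sqrt L * (2 * Real.sqrt L) = 4 * (Real.sqrt L * Real.sqrt L) := by
          ring
        rw [h2, hmulL] at h
        exact h
      have hE4l : E4 ≤ L := by
        rw [hE4L]
        calc L ^ ((1:ℝ)/4) ≤ L ^ (1:ℝ) :=
              Real.rpow_le_rpow_of_exponent_le hL1 (by norm_num)
          _ = L := Real.rpow_one L
      have hαL : α ≤ 4 / L ^ 2 := by
        rw [hαe]; exact aux_exp_neg hL0
      have e4 : α * (B * B) * E4 ≤ (4 / L ^ 2) * (4 * L) * L := by
        apply mul_le_mul _ hE4l (by linarith) _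
        · apply mul_le_mul hαL hBB _ (by positivity)
          have := mul_nonneg (by linarith : (0:ℝ) ≤ B) (by linarith : (0:ℝ) ≤ B)
          linarith
        · positivity
      have e5 : (4 / L ^ 2) * (4 * L) * L = 16 := by
        field_simp
        ring
      have e6 : 8 ≤ γ * L := by
        rw [div_le_iff₀ hγ] at hc7; linarith
      linarith
    have hsecond : α * B / sq * T ≤ γ * L / 4 := by
      have hsq_eq : sq = Real.exp (-(L/2)) := by
        rw [hsqdef, hαe, Real.sqrt_eq_rpow, Real.rpow_def_of_pos (Real.exp_pos _),
          Real.log_exp]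
        congr 1; ring
      have hsqb : sq ≤ 16 / L ^ 2 := by
        rw [hsq_eq]
        calc Real.exp (-(L/2)) ≤ 4 / (L/2) ^ 2 :=
              aux_exp_neg (show (0:ℝ) < L/2 by linarith)
          _ = 16 / L ^ 2 := by
              field_simp; ring
      have hBB : B * B ≤ 4 * L := by
        have h := mul_le_mul hB2 hB2 (by linarith : (0:ℝ) ≤ B)
          (by linarith [hsqL.le] : (0:ℝ) ≤ 2 * Real.sqrt L)
        have h2 : 2 * Real.sqrt L * (2 * Real.sqrt L) = 4 * (Real.sqrt L * Real.sqrt L) := by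
          ring
        rw [h2, hmulL] at h
        exact h
      have hsqB0 : 0 ≤ α * B / sq := div_nonneg (mul_nonneg hα.le (by linarith)) hsq_pos.le
      have h1 : α * B / sq * T ≤ α * B / sq * (α * B / (4 * c)) :=
        mul_le_mul_of_nonneg_left hT hsqB0
      have hαdiv : α / sq = sq := by
        rw [← hsq_mul]; field_simp
      have h2 : α * B / sq * (α * B / (4 * c)) = sq * (B * (α * B / (4 * c))) := by
        have e : α * B / sq * (α * B / (4 * c)) = (α / sq) * (B * (α * B / (4 * c))) := by
          ring
        rw [e, hαdiv]
      have h3 : α * B / (4 * c) ≤ B / (4 * (C * δ)) := by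
        apply div_le_div₀ (by linarith : (0:ℝ) ≤ B) ?_ (mul_pos (by norm_num) hCδ) ?_
        · have := mul_le_mul_of_nonneg_right hα1 (by linarith : (0:ℝ) ≤ B)
          linarith
        · linarith [hc_ge]
      have h5 : sq * (B * (α * B / (4 * c))) ≤ sq * (B * (B / (4 * (C * δ)))) := by
        apply mul_le_mul_of_nonneg_left _ hsq_pos.le
        exact mul_le_mul_of_nonneg_left h3 (by linarith)
      have h6 : sq * (B * (B / (4 * (C * δ)))) = sq * (B * B) / (4 * (C * δ)) := by
        ring
      have h7 : sq * (B * B) ≤ (16 / L ^ 2) * (4 * L) := by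
        apply mul_le_mul hsqb hBB _ (by positivity)
        exact mul_nonneg (by linarith) (by linarith)
      have h8 : (16 / L ^ 2) * (4 * L) = 64 / L := by
        field_simp; ring
      have h9 : sq * (B * B) / (4 * (C * δ)) ≤ (64 / L) / (4 * (C * δ)) := by
        apply (div_le_div_iff_of_pos_right (mul_pos (by norm_num) hCδ)).2
        linarith
      have h10 : (64 / L) / (4 * (C * δ)) ≤ γ * L / 4 := by
        rw [div_div, div_le_div_iff₀ (mul_pos hL0 (mul_pos (by norm_num) hCδ))
          (by norm_num : (0:ℝ) < 4)]
        have h11 : 128 ≤ C * δ * γ * L := by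
          rw [div_le_iff₀ (mul_pos (mul_pos hC hδ) hγ)] at hc6
          linarith [hc6]
        have h12 : (C * δ * γ * L) * 1 ≤ (C * δ * γ * L) * L :=
          mul_le_mul_of_nonneg_left hL1 (mul_nonneg (mul_nonneg hCδ.le hγ.le) hL0.le)
        linarith
      linarith
    linarith
  -- final
  have hA2 : A ≤ 2 * α ^ (1 - ε) := by rw [hAdef]; linarith
  have hmain : F t ≤ 2 * α ^ (1 - ε) * Real.exp (γ * L / 2) := by
    calc F t ≤ A * Real.exp (K1 * T) := hGT
      _ ≤ (2 * α ^ (1 - ε)) * Real.exp (γ * L / 2) :=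
          mul_le_mul hA2 (Real.exp_le_exp.2 hC2) (Real.exp_pos _).le (by linarith)
  have hrpow_eq2 : α ^ (1 - ε) = Real.exp (-(1 - ε) * L) := by
    rw [Real.rpow_def_of_pos hα, hlogα]
    congr 1; ring
  have hsq_eq : sq = Real.exp (-(L/2)) := by
    rw [hsqdef, hαe, Real.sqrt_eq_rpow, Real.rpow_def_of_pos (Real.exp_pos _), Real.log_exp]
    congr 1; ring
  have hfinal : 2 * α ^ (1 - ε) * Real.exp (γ * L / 2) ≤ 3 * sq := by
    rw [hrpow_eq2, hsq_eq]
    have h1 : Real.exp (-(1 - ε) * L) * Real.exp (γ * L / 2)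
        = Real.exp (-(L/2)) * Real.exp (-(γ * L / 2)) := by
      rw [← Real.exp_add, ← Real.exp_add]
      congr 1
      rw [hγdef]; ring
    have h2 : Real.exp (-(γ * L / 2)) ≤ 1 := Real.exp_le_one_iff.2 (by
      have := mul_nonneg hγ.le hL0.le; linarith)
    have h3 := Real.exp_pos (-(L/2))
    calc 2 * Real.exp (-(1 - ε) * L) * Real.exp (γ * L / 2)
        = 2 * (Real.exp (-(L/2)) * Real.exp (-(γ * L / 2))) := by rw [← h1]; ring
      _ ≤ 2 * (Real.exp (-(L/2)) * 1) := by
          have := mul_le_mul_of_nonneg_left h2 h3.le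
          linarith
      _ ≤ 3 * Real.exp (-(L/2)) := by rw [mul_one]; linarith
  linarith
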